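/- For 0 < γ < 1, the sequence u_n = ((n − ⌊n^{1−γ}⌋ − 1)/n)^{1−γ} · exp((n − ⌊n^{1−γ}⌋ − 1)^γ − n^γ) converges to e^{−γ} as n → ∞. -/

import Mathlib

open Filter Real Topology

theorem stmt_6 (γ : ℝ) (h0 : 0 < γ) (h1 : γ < 1) :
    Filter.Tendsto
      (fun n : ℕ =>
        (((n : ℝ) - (⌊(n : ℝ) ^ (1 - γ)⌋₊ : ℝ) - 1) / (n : ℝ)) ^ (1 - γ) *
          Real.exp (((n : ℝ) - (⌊(n : ℝ) ^ (1 - γ)⌋₊ : ℝ) - 1) ^ γ - (n : ℝ) ^ γ))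
      Filter.atTop (nhds (Real.exp (-γ))) := by
  have h1γ : 0 < 1 - γ := by linarith
  set m : ℕ → ℝ := fun n => (n : ℝ) - (⌊(n : ℝ) ^ (1 - γ)⌋₊ : ℝ) - 1 with hm
  set k : ℕ → ℝ := fun n => (⌊(n : ℝ) ^ (1 - γ)⌋₊ : ℝ) + 1 with hk
  clear_value m k
  have hkpos : ∀ n : ℕ, 0 < k n := fun n => by rw [hk]; positivity
  -- limits of n^{-γ}, n^{-(1-γ)}, 1/n
  have hng : Tendsto (fun n : ℕ => (n : ℝ) ^ (-γ)) atTop (nhds 0) :=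
    (tendsto_rpow_neg_atTop h0).comp tendsto_natCast_atTop_atTop
  have hn1g : Tendsto (fun n : ℕ => (n : ℝ) ^ (-(1 - γ))) atTop (nhds 0) :=
    (tendsto_rpow_neg_atTop h1γ).comp tendsto_natCast_atTop_atTop
  have hninv : Tendsto (fun n : ℕ => ((n : ℝ))⁻¹) atTop (nhds 0) :=
    tendsto_inv_atTop_zero.comp tendsto_natCast_atTop_atTop
  -- k n / n → 0
  have hkn : Tendsto (fun n : ℕ => k n / (n : ℝ)) atTop (nhds 0) := by
    have hub : Tendsto (fun n : ℕ => (n : ℝ) ^ (-γ) + ((n : ℝ))⁻¹) atTop (nhds 0) := by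
      simpa using hng.add hninv
    refine tendsto_of_tendsto_of_tendsto_of_le_of_le' tendsto_const_nhds hub ?_ ?_
    · filter_upwards [eventually_ge_atTop 1] with n hn
      have hn0 : (0 : ℝ) < (n : ℝ) := by exact_mod_cast hn
      exact div_nonneg (hkpos n).le hn0.le
    · filter_upwards [eventually_ge_atTop 1] with n hn
      have hn0 : (0 : ℝ) < (n : ℝ) := by exact_mod_cast hn
      have hfl : k n ≤ (n : ℝ) ^ (1 - γ) + 1 := by
        have := Nat.floor_le (Real.rpow_nonneg hn0.le (1 - γ))
        simp only [hk]; linarith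
      have h2 : (n : ℝ) ^ (1 - γ) = (n : ℝ) ^ (-γ) * (n : ℝ) := by
        rw [show (1 - γ) = -γ + 1 by ring, Real.rpow_add_one hn0.ne']
      calc k n / (n : ℝ) ≤ ((n : ℝ) ^ (1 - γ) + 1) / (n : ℝ) := by gcongr
        _ = (n : ℝ) ^ (-γ) + ((n : ℝ))⁻¹ := by
            rw [h2, add_div, mul_div_assoc, div_self hn0.ne', mul_one, one_div]
  -- m n / n → 1
  have hmn1 : Tendsto (fun n : ℕ => m n / (n : ℝ)) atTop (nhds 1) := by
    have : Tendsto (fun n : ℕ => 1 - k n / (n : ℝ)) atTop (nhds 1) := by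
      simpa using tendsto_const_nhds.sub hkn
    refine this.congr' ?_
    filter_upwards [eventually_ge_atTop 1] with n hn
    have hn0 : ((n : ℝ)) ≠ 0 := by positivity
    rw [hm, hk]; simp only
    field_simp
    ring
  -- D n := k n / n^{1-γ} → 1
  have hD : Tendsto (fun n : ℕ => k n / (n : ℝ) ^ (1 - γ)) atTop (nhds 1) := by
    have hub : Tendsto (fun n : ℕ => 1 + (n : ℝ) ^ (-(1 - γ))) atTop (nhds 1) := by
      simpa using tendsto_const_nhds.add hn1g
    refine tendsto_of_tendsto_of_tendsto_of_le_of_le' tendsto_const_nhds hub ?_ ?_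
    · filter_upwards [eventually_ge_atTop 1] with n hn
      have hn0 : (0 : ℝ) < (n : ℝ) := by exact_mod_cast hn
      have hp : (0 : ℝ) < (n : ℝ) ^ (1 - γ) := Real.rpow_pos_of_pos hn0 _
      rw [le_div_iff₀ hp, one_mul]
      have := Nat.lt_floor_add_one ((n : ℝ) ^ (1 - γ))
      simp only [hk]; linarith
    · filter_upwards [eventually_ge_atTop 1] with n hn
      have hn0 : (0 : ℝ) < (n : ℝ) := by exact_mod_cast hn
      have hp : (0 : ℝ) < (n : ℝ) ^ (1 - γ) := Real.rpow_pos_of_pos hn0 _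
      have hfl : k n ≤ (n : ℝ) ^ (1 - γ) + 1 := by
        have := Nat.floor_le (Real.rpow_nonneg hn0.le (1 - γ))
        simp only [hk]; linarith
      rw [div_le_iff₀ hp]
      rw [Real.rpow_neg hn0.le]
      have : (1 + ((n : ℝ) ^ (1 - γ))⁻¹) * (n : ℝ) ^ (1 - γ) = (n : ℝ) ^ (1 - γ) + 1 := by
        field_simp
      linarith [this ▸ hfl]
  -- (m n / n)^(γ-1) → 1 and (m n / n)^(1-γ) → 1
  have hpowlim : ∀ p : ℝ, Tendsto (fun n : ℕ => (m n / (n : ℝ)) ^ p) atTop (nhds 1) := by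
    intro p
    have := (Real.continuousAt_rpow_const 1 p (Or.inl one_ne_zero)).tendsto.comp hmn1
    simpa [Real.one_rpow, Function.comp_def] using this
  -- eventual positivity
  have hhalf : ∀ᶠ n : ℕ in atTop, k n / (n : ℝ) < 1 / 2 :=
    hkn.eventually_lt_const (by norm_num)
  -- main squeeze on F n = n^γ - m n ^ γ
  have hFbound : ∀ᶠ n : ℕ in atTop,
      γ * (k n / (n : ℝ) ^ (1 - γ)) ≤ (n : ℝ) ^ γ - m n ^ γ ∧
      (n : ℝ) ^ γ - m n ^ γ ≤ γ * ((m n / (n : ℝ)) ^ (γ - 1) * (k n / (n : ℝ) ^ (1 - γ))) := by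
    filter_upwards [eventually_ge_atTop 1, hhalf] with n hn hhn
    have hn0 : (0 : ℝ) < (n : ℝ) := by exact_mod_cast hn
    have hklt : 2 * k n < (n : ℝ) := by
      have := (div_lt_iff₀ hn0).mp hhn
      linarith
    have hma : m n = (n : ℝ) - k n := by rw [hm, hk]; simp only; ring
    have hapos : 0 < m n := by rw [hma]; linarith
    have hab : m n < (n : ℝ) := by rw [hma]; linarith [hkpos n]
    obtain ⟨c, hc, hceq⟩ := exists_hasDerivAt_eq_slope (fun x => x ^ γ)
      (fun x => γ * x ^ (γ - 1)) hab
      (fun x hx => (Real.continuousAt_rpow_const x γ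
        (Or.inl (ne_of_gt (lt_of_lt_of_le hapos hx.1)))).continuousWithinAt)
      (fun x hx => Real.hasDerivAt_rpow_const (Or.inl (ne_of_gt (lt_trans hapos hx.1))))
    have hcpos : 0 < c := lt_trans hapos hc.1
    have hbne : (n : ℝ) - m n ≠ 0 := by linarith
    have hFeq : (n : ℝ) ^ γ - m n ^ γ = γ * c ^ (γ - 1) * k n := by
      have := (eq_div_iff hbne).mp hceq
      rw [← this]; rw [hma]; ring
    have hkn' : (n : ℝ) - m n = k n := by rw [hma]; ring
    have hγ1 : γ - 1 ≤ 0 := by linarith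
    have hlow : (n : ℝ) ^ (γ - 1) ≤ c ^ (γ - 1) :=
      Real.rpow_le_rpow_of_nonpos hcpos hc.2.le hγ1
    have hup : c ^ (γ - 1) ≤ m n ^ (γ - 1) :=
      Real.rpow_le_rpow_of_nonpos hapos hc.1.le hγ1
    have hninv : (n : ℝ) ^ (γ - 1) = ((n : ℝ) ^ (1 - γ))⁻¹ := by
      rw [show γ - 1 = -(1 - γ) by ring, Real.rpow_neg hn0.le]
    constructor
    · rw [hFeq]
      have : γ * (k n / (n : ℝ) ^ (1 - γ)) = γ * (n : ℝ) ^ (γ - 1) * k n := by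
        rw [hninv]; ring
      rw [this]
      have := mul_le_mul_of_nonneg_right hlow (hkpos n).le
      nlinarith [h0.le]
    · rw [hFeq]
      have hsplit : m n ^ (γ - 1) = (m n / (n : ℝ)) ^ (γ - 1) * (n : ℝ) ^ (γ - 1) := by
        rw [← Real.mul_rpow (by positivity) hn0.le, div_mul_cancel₀]
        exact hn0.ne'
      have : γ * ((m n / (n : ℝ)) ^ (γ - 1) * (k n / (n : ℝ) ^ (1 - γ))) =
          γ * (m n ^ (γ - 1)) * k n := by
        rw [hsplit, hninv]; ring
      rw [this]
      have := mul_le_mul_of_nonneg_right hup (hkpos n).le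
      nlinarith [h0.le]
  have hlowlim : Tendsto (fun n : ℕ => γ * (k n / (n : ℝ) ^ (1 - γ))) atTop (nhds γ) := by
    simpa using tendsto_const_nhds.mul hD
  have huplim : Tendsto
      (fun n : ℕ => γ * ((m n / (n : ℝ)) ^ (γ - 1) * (k n / (n : ℝ) ^ (1 - γ))))
      atTop (nhds γ) := by
    simpa using tendsto_const_nhds.mul ((hpowlim (γ - 1)).mul hD)
  have hF : Tendsto (fun n : ℕ => (n : ℝ) ^ γ - m n ^ γ) atTop (nhds γ) :=
    tendsto_of_tendsto_of_tendsto_of_le_of_le' hlowlim huplim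
      (hFbound.mono fun n h => h.1) (hFbound.mono fun n h => h.2)
  have hexp : Tendsto (fun n : ℕ => Real.exp (m n ^ γ - (n : ℝ) ^ γ)) atTop
      (nhds (Real.exp (-γ))) := by
    have hneg : Tendsto (fun n : ℕ => m n ^ γ - (n : ℝ) ^ γ) atTop (nhds (-γ)) := by
      have := hF.neg
      simpa [neg_sub] using this
    exact (Real.continuous_exp.tendsto _).comp hneg
  have := (hpowlim (1 - γ)).mul hexp
  simpa [hm, hk] using this
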